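/- Assume hypotheses (EC) and (UC). (i) For every τ ∈ [0,T) and 0 ≤ M < M^τ, every optimal control to (OP)^{M,τ} is an optimal control to (NP)^{τ,r(M,τ)}. (ii) For every τ ∈ [0,T) and r ∈ (0,r_T], every optimal control to (NP)^{τ,r} is an optimal control to (OP)^{M(τ,r),τ}. (iii) For every τ ∈ [0,T) and r ∈ (0,r_T], (NP)^{τ,r} has the bang-bang property (every optimal control u* satisfies ‖u*(t)‖ = M(τ,r) for a.e. t ∈ (τ,T)) and its optimal control is unique (any two optimal controls coincide a.e. on (τ,T)). -/

import Mathlib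

open MeasureTheory Set Filter Topology

noncomputable section

variable {H : Type*} [NormedAddCommGroup H] [InnerProductSpace ℂ H] [CompleteSpace H]
  [SecondCountableTopology H]

/-- `U` is a strongly continuous one-parameter group of unitary operators on `H`,
abstracting the Schrödinger group `e^{-iΔt}`. -/
def IsUnitaryGroup (U : ℝ → H →L[ℂ] H) : Prop :=
  U 0 = ContinuousLinearMap.id ℂ H ∧
  (∀ s t : ℝ, U (s + t) = (U s).comp (U t)) ∧
  (∀ (t : ℝ) (x : H), ‖U t x‖ = ‖x‖) ∧
  ∀ x : H, Continuous fun t : ℝ => U t x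

/-- `B` is a nonzero orthogonal projection on `H`, abstracting multiplication by `χ_ω`. -/
def IsOrthProj (B : H →L[ℂ] H) : Prop :=
  B ≠ 0 ∧ B.comp B = B ∧ ∀ x y : H, (inner ℂ (B x) y : ℂ) = inner ℂ x (B y)

/-- Membership in `L∞((a,b);H)`. -/
def MemLinfty (u : ℝ → H) (a b : ℝ) : Prop :=
  AEStronglyMeasurable u (volume : Measure ℝ) ∧
    ∃ c : ℝ, ∀ᵐ t : ℝ ∂volume, t ∈ Ioo a b → ‖u t‖ ≤ c

/-- Membership in `L∞((0,∞);H)`. -/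
def MemLinftyInf (u : ℝ → H) : Prop :=
  AEStronglyMeasurable u (volume : Measure ℝ) ∧
    ∃ c : ℝ, ∀ᵐ t : ℝ ∂volume, t ∈ Ioi (0 : ℝ) → ‖u t‖ ≤ c

/-- The `L∞((a,b);H)` norm of `u`. -/
def supNorm (u : ℝ → H) (a b : ℝ) : ℝ :=
  sInf {c : ℝ | 0 ≤ c ∧ ∀ᵐ t : ℝ ∂volume, t ∈ Ioo a b → ‖u t‖ ≤ c}

/-- `stateT U B T τ u y₀ = y(T; χ_{(τ,T)}u, y₀)`, the mild solution at time `T` of the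
controlled Schrödinger equation with initial state `y₀`, the control acting on `(τ,T)`:
`y(T) = U(T)y₀ + ∫_τ^T U(T-s) B u(s) ds`.  The free state at time `t` starting from `y₀`
with control `u` active from time `0` is `stateT U B t 0 u y₀`. -/
def stateT (U : ℝ → H →L[ℂ] H) (B : H →L[ℂ] H) (T τ : ℝ) (u : ℝ → H) (y₀ : H) : H :=
  U T y₀ + ∫ s in Ioo τ T, U (T - s) (B (u s))

/-- Hypothesis (EC): `L∞`-exact controllability with cost. -/
def EC (U : ℝ → H →L[ℂ] H) (B : H →L[ℂ] H) : Prop :=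
  ∀ τ : ℝ, 0 < τ → ∃ C : ℝ, 0 < C ∧ ∀ y₀ z : H, ∃ u : ℝ → H,
    AEStronglyMeasurable u (volume : Measure ℝ) ∧
    (∀ᵐ t : ℝ ∂volume, t ∈ Ioo 0 τ → ‖u t‖ ≤ C * ‖z - U τ y₀‖) ∧
    stateT U B τ 0 u y₀ = z

/-- Hypothesis (UC): unique continuation. -/
def UC (U : ℝ → H →L[ℂ] H) (B : H →L[ℂ] H) : Prop :=
  ∀ η : H, η ≠ 0 → volume {t : ℝ | B (U t η) = 0} = 0

/-- The admissible set `U_M` of the minimal time problem `(TOCP)_M`. -/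
def UMset (U : ℝ → H →L[ℂ] H) (B : H →L[ℂ] H) (y₀ : H) (M : ℝ) : Set (ℝ → H) :=
  {u | MemLinftyInf u ∧ (∀ᵐ t : ℝ ∂volume, t ∈ Ioi (0 : ℝ) → ‖u t‖ ≤ M) ∧
    ∃ s : ℝ, 0 < s ∧ stateT U B s 0 u y₀ = 0}

/-- The minimal time `T_M` of `(TOCP)_M`. -/
def Tmin (U : ℝ → H →L[ℂ] H) (B : H →L[ℂ] H) (y₀ : H) (M : ℝ) : ℝ :=
  sInf {s : ℝ | 0 < s ∧ ∃ u ∈ UMset U B y₀ M, stateT U B s 0 u y₀ = 0}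

/-- The admissible set `V_T` of the minimal norm problem `(NOCP)_T`. -/
def VTset (U : ℝ → H →L[ℂ] H) (B : H →L[ℂ] H) (y₀ : H) (T : ℝ) : Set (ℝ → H) :=
  {v | MemLinfty v 0 T ∧ stateT U B T 0 v y₀ = 0}

/-- The minimal norm `M_T` of `(NOCP)_T`. -/
def Mmin (U : ℝ → H →L[ℂ] H) (B : H →L[ℂ] H) (y₀ : H) (T : ℝ) : ℝ :=
  sInf ((fun v : ℝ → H => supNorm v 0 T) '' VTset U B y₀ T)

/-- Hypothesis (BB): bang-bang property of the minimal time problems. -/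
def BB (U : ℝ → H →L[ℂ] H) (B : H →L[ℂ] H) : Prop :=
  ∀ y₀ : H, y₀ ≠ 0 → ∀ M : ℝ, 0 < M → ∀ u ∈ UMset U B y₀ M,
    stateT U B (Tmin U B y₀ M) 0 u y₀ = 0 →
    ∀ᵐ t : ℝ ∂volume, t ∈ Ioo 0 (Tmin U B y₀ M) → ‖u t‖ = M

/-- Hypothesis (ET): existence of optimal controls for the minimal time problems. -/
def ET (U : ℝ → H →L[ℂ] H) (B : H →L[ℂ] H) : Prop :=
  ∀ y₀ : H, y₀ ≠ 0 → ∀ M : ℝ, 0 < M →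
    ∃ u ∈ UMset U B y₀ M, stateT U B (Tmin U B y₀ M) 0 u y₀ = 0

/-- The admissible set `U_{M,τ}`. -/
def UadmSet (M τ T : ℝ) : Set (ℝ → H) :=
  {u | MemLinfty u 0 T ∧ ∀ᵐ t : ℝ ∂volume, t ∈ Ioo τ T → ‖u t‖ ≤ M}

/-- The optimal distance `r(M,τ)` of the optimal target problem `(OP)^{M,τ}`. -/
def rOP (U : ℝ → H →L[ℂ] H) (B : H →L[ℂ] H) (y₀ z_d : H) (T M τ : ℝ) : ℝ :=
  sInf ((fun u : ℝ → H => ‖stateT U B T τ u y₀ - z_d‖) '' UadmSet M τ T)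

/-- `u` is an optimal control to `(OP)^{M,τ}`. -/
def IsOptOP (U : ℝ → H →L[ℂ] H) (B : H →L[ℂ] H) (y₀ z_d : H) (T M τ : ℝ) (u : ℝ → H) :
    Prop :=
  u ∈ UadmSet M τ T ∧ ‖stateT U B T τ u y₀ - z_d‖ = rOP U B y₀ z_d T M τ

/-- `M^τ`, the minimal norm for exact steering to the target `z_d`. -/
def Mtau (U : ℝ → H →L[ℂ] H) (B : H →L[ℂ] H) (y₀ z_d : H) (T τ : ℝ) : ℝ :=
  sInf ((fun u : ℝ → H => supNorm u τ T) ''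
    {u : ℝ → H | MemLinfty u 0 T ∧ stateT U B T τ u y₀ = z_d})

/-- The admissible set `W_{τ,r}` of the optimal norm problem `(NP)^{τ,r}`. -/
def WadmSet (U : ℝ → H →L[ℂ] H) (B : H →L[ℂ] H) (y₀ z_d : H) (T τ r : ℝ) :
    Set (ℝ → H) :=
  {u | MemLinfty u 0 T ∧ ‖stateT U B T τ u y₀ - z_d‖ ≤ r}

/-- The optimal norm `M(τ,r)` of `(NP)^{τ,r}`. -/
def MNP (U : ℝ → H →L[ℂ] H) (B : H →L[ℂ] H) (y₀ z_d : H) (T τ r : ℝ) : ℝ :=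
  sInf ((fun u : ℝ → H => supNorm u τ T) '' WadmSet U B y₀ z_d T τ r)

/-- `u` is an optimal control to `(NP)^{τ,r}`. -/
def IsOptNP (U : ℝ → H →L[ℂ] H) (B : H →L[ℂ] H) (y₀ z_d : H) (T τ r : ℝ) (u : ℝ → H) :
    Prop :=
  u ∈ WadmSet U B y₀ z_d T τ r ∧ supNorm u τ T = MNP U B y₀ z_d T τ r

/-- The admissible set `V_{M,r}` of the second type optimal time problem `(TP)^{M,r}`. -/
def VadmSet (U : ℝ → H →L[ℂ] H) (B : H →L[ℂ] H) (y₀ z_d : H) (T M r : ℝ) :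
    Set (ℝ → H) :=
  {u | ∃ τ : ℝ, τ ∈ Ico (0 : ℝ) T ∧ u ∈ UadmSet M τ T ∧
    ‖stateT U B T τ u y₀ - z_d‖ ≤ r}

/-- `τ_{M,r}(u)`. -/
def tauOf (U : ℝ → H →L[ℂ] H) (B : H →L[ℂ] H) (y₀ z_d : H) (T r : ℝ) (u : ℝ → H) : ℝ :=
  sSup {τ : ℝ | τ ∈ Ico (0 : ℝ) T ∧ ‖stateT U B T τ u y₀ - z_d‖ ≤ r}

/-- The optimal time `τ(M,r)` of `(TP)^{M,r}`. -/
def tauTP (U : ℝ → H →L[ℂ] H) (B : H →L[ℂ] H) (y₀ z_d : H) (T M r : ℝ) : ℝ :=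
  sSup (tauOf U B y₀ z_d T r '' VadmSet U B y₀ z_d T M r)

/-- `u` is an optimal control to `(TP)^{M,r}`. -/
def IsOptTP (U : ℝ → H →L[ℂ] H) (B : H →L[ℂ] H) (y₀ z_d : H) (T M r : ℝ) (u : ℝ → H) :
    Prop :=
  u ∈ VadmSet U B y₀ z_d T M r ∧
    ‖stateT U B T (tauTP U B y₀ z_d T M r) u y₀ - z_d‖ ≤ r

/-- The adjoint state `φ*(t) = U(t-T)(z_d - y(T; χ_{(τ,T)}u, y₀))`. -/
def adjState (U : ℝ → H →L[ℂ] H) (B : H →L[ℂ] H) (y₀ z_d : H) (T τ : ℝ) (u : ℝ → H)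
    (t : ℝ) : H :=
  U (t - T) (z_d - stateT U B T τ u y₀)

set_option linter.unusedSectionVars false
set_option maxHeartbeats 800000

section Helpers

local notation "⟪" x ", " y "⟫" => (inner ℂ x y : ℂ)

variable {U : ℝ → H →L[ℂ] H} {B : H →L[ℂ] H}

lemma IsUnitaryGroup.cont2 (hU : IsUnitaryGroup U) :
    Continuous fun p : ℝ × H => U p.1 p.2 := by
  obtain ⟨h0, hadd, hiso, hcont⟩ := hU
  rw [Metric.continuous_iff]
  rintro ⟨t₀, x₀⟩ ε hε
  obtain ⟨δ, hδ, hδ'⟩ := Metric.continuous_iff.mp (hcont x₀) t₀ (ε / 2) (by positivity)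
  refine ⟨min δ (ε / 2), by positivity, ?_⟩
  rintro ⟨t, x⟩ hd
  rw [Prod.dist_eq] at hd
  have h1 : dist t t₀ < δ := ((le_max_left _ _).trans_lt hd).trans_le (min_le_left _ _)
  have h2 : dist x x₀ < ε / 2 := ((le_max_right _ _).trans_lt hd).trans_le (min_le_right _ _)
  have h3 : dist (U t x) (U t x₀) = dist x x₀ := by
    rw [dist_eq_norm, ← map_sub, hiso, dist_eq_norm]
  calc dist (U t x) (U t₀ x₀) ≤ dist (U t x) (U t x₀) + dist (U t x₀) (U t₀ x₀) :=
        dist_triangle _ _ _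
    _ < ε / 2 + ε / 2 := add_lt_add (h3 ▸ h2) (hδ' t h1)
    _ = ε := add_halves ε

lemma IsUnitaryGroup.aesm_integrand (hU : IsUnitaryGroup U) {u : ℝ → H}
    (hu : AEStronglyMeasurable u (volume : Measure ℝ)) (T : ℝ) :
    AEStronglyMeasurable (fun s : ℝ => U (T - s) (B (u s))) (volume : Measure ℝ) := by
  have h1 : AEStronglyMeasurable (fun s : ℝ => ((T - s : ℝ), B (u s))) volume :=
    (measurable_const.sub measurable_id).aestronglyMeasurable.prodMk
      (B.continuous.comp_aestronglyMeasurable hu)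
  exact hU.cont2.comp_aestronglyMeasurable h1

lemma IsUnitaryGroup.integrableOn_integrand (hU : IsUnitaryGroup U) {u : ℝ → H} {τ T c : ℝ}
    (hu : AEStronglyMeasurable u (volume : Measure ℝ))
    (hbd : ∀ᵐ t : ℝ ∂volume, t ∈ Ioo τ T → ‖u t‖ ≤ c) :
    IntegrableOn (fun s : ℝ => U (T - s) (B (u s))) (Ioo τ T) volume := by
  refine Integrable.mono' (g := fun _ => ‖B‖ * c)
    (integrableOn_const measure_Ioo_lt_top.ne) (hU.aesm_integrand hu T).restrict ?_
  rw [ae_restrict_iff' measurableSet_Ioo]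
  refine hbd.mono fun t ht hmem => ?_
  rw [hU.2.2.1]
  exact (B.le_opNorm _).trans (mul_le_mul_of_nonneg_left (ht hmem) (norm_nonneg B))

lemma IsUnitaryGroup.inner_map_map (hU : IsUnitaryGroup U) (t : ℝ) (x y : H) :
    ⟪U t x, U t y⟫ = ⟪x, y⟫ := by
  let f : H →ₗᵢ[ℂ] H := ⟨(U t : H →ₗ[ℂ] H), fun z => hU.2.2.1 t z⟩
  exact f.inner_map_map x y

lemma IsUnitaryGroup.inner_left (hU : IsUnitaryGroup U) (t : ℝ) (x y : H) :
    ⟪x, U t y⟫ = ⟪U (-t) x, y⟫ := by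
  have hx : x = U t (U (-t) x) := by
    rw [← ContinuousLinearMap.comp_apply, ← hU.2.1, add_neg_cancel, hU.1]; rfl
  conv_lhs => rw [hx]
  exact hU.inner_map_map t _ y

lemma IsOrthProj.inner_self' (hB : IsOrthProj B) (x : H) :
    RCLike.re ⟪B x, x⟫ = ‖B x‖ ^ 2 := by
  have h1 : B (B x) = B x := by
    rw [← ContinuousLinearMap.comp_apply, hB.2.1]
  have e : ⟪B (B x), x⟫ = ⟪B x, B x⟫ := hB.2.2 (B x) x
  rw [h1] at e
  rw [e, inner_self_eq_norm_sq]

lemma supNorm_nonneg (u : ℝ → H) (a b : ℝ) : 0 ≤ supNorm u a b :=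
  Real.sInf_nonneg fun _ hx => hx.1

lemma supNorm_le {u : ℝ → H} {a b c : ℝ} (hc : 0 ≤ c)
    (h : ∀ᵐ t : ℝ ∂volume, t ∈ Ioo a b → ‖u t‖ ≤ c) : supNorm u a b ≤ c :=
  csInf_le ⟨0, fun _ hx => hx.1⟩ ⟨hc, h⟩

lemma ae_le_supNorm {u : ℝ → H} {a b : ℝ}
    (h : ∃ c : ℝ, ∀ᵐ t : ℝ ∂volume, t ∈ Ioo a b → ‖u t‖ ≤ c) :
    ∀ᵐ t : ℝ ∂volume, t ∈ Ioo a b → ‖u t‖ ≤ supNorm u a b := by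
  obtain ⟨c, hc⟩ := h
  set S := {c : ℝ | 0 ≤ c ∧ ∀ᵐ t : ℝ ∂volume, t ∈ Ioo a b → ‖u t‖ ≤ c} with hS
  have hne : S.Nonempty :=
    ⟨max c 0, le_max_right _ _, hc.mono fun t ht hmem => (ht hmem).trans (le_max_left _ _)⟩
  have hbd : BddBelow S := ⟨0, fun _ hx => hx.1⟩
  obtain ⟨f, -, hf_tendsto, hf_mem⟩ := exists_seq_tendsto_sInf hne hbd
  have hall : ∀ᵐ t : ℝ ∂volume, ∀ n : ℕ, t ∈ Ioo a b → ‖u t‖ ≤ f n :=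
    ae_all_iff.2 fun n => (hf_mem n).2
  exact hall.mono fun t ht hmem =>
    ge_of_tendsto hf_tendsto (Eventually.of_forall fun n => ht n hmem)

lemma memLinfty_bound_sub {u : ℝ → H} {T τ : ℝ} (h : MemLinfty u 0 T) (hτ : 0 ≤ τ) :
    ∃ c : ℝ, ∀ᵐ t : ℝ ∂volume, t ∈ Ioo τ T → ‖u t‖ ≤ c :=
  ⟨h.2.choose, h.2.choose_spec.mono fun t ht hm => ht ⟨hτ.trans_lt hm.1, hm.2⟩⟩

lemma UC.ae_ne {η : H} (hUC : UC U B) (hη : η ≠ 0) (T : ℝ) :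
    ∀ᵐ s : ℝ ∂volume, B (U (s - T) η) ≠ 0 := by
  have h0 := hUC η hη
  have hmeas : volume {s : ℝ | B (U (s - T) η) = 0} = 0 := by
    have he : {s : ℝ | B (U (s - T) η) = 0}
        = (fun s : ℝ => s + -T) ⁻¹' {t : ℝ | B (U t η) = 0} := by
      ext s; simp [sub_eq_add_neg]
    rw [he, measure_preimage_add_right]
    exact h0
  rw [ae_iff]
  simpa using hmeas

end Helpers
section Ctrl

local notation "⟪" x ", " y "⟫" => (inner ℂ x y : ℂ)

variable (U : ℝ → H →L[ℂ] H) (B : H →L[ℂ] H)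

/-- The control-to-state integral. -/
def ctrl (T τ : ℝ) (u : ℝ → H) : H := ∫ s in Ioo τ T, U (T - s) (B (u s))

variable {U B}

lemma stateT_eq (T τ : ℝ) (u : ℝ → H) (y₀ : H) :
    stateT U B T τ u y₀ = U T y₀ + ctrl U B T τ u := rfl

lemma ctrl_smul (T τ : ℝ) (c : ℂ) (u : ℝ → H) :
    ctrl U B T τ (fun s => c • u s) = c • ctrl U B T τ u := by
  simp only [ctrl, _root_.map_smul, integral_smul]

lemma ctrl_zero_of {T τ : ℝ} {u : ℝ → H}
    (h : ∀ᵐ t : ℝ ∂volume, t ∈ Ioo τ T → ‖u t‖ ≤ 0) : ctrl U B T τ u = 0 := by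
  refine integral_eq_zero_of_ae ((ae_restrict_iff' measurableSet_Ioo).2 (h.mono ?_))
  intro t ht hm
  have hz : u t = 0 := norm_le_zero_iff.1 (ht hm)
  simp [hz]

lemma re_inner_ctrl (hU : IsUnitaryGroup U) (η : H) {u : ℝ → H} {τ T c : ℝ}
    (hu : AEStronglyMeasurable u (volume : Measure ℝ))
    (hbd : ∀ᵐ t : ℝ ∂volume, t ∈ Ioo τ T → ‖u t‖ ≤ c) :
    RCLike.re ⟪η, ctrl U B T τ u⟫
      = ∫ s in Ioo τ T, RCLike.re ⟪η, U (T - s) (B (u s))⟫ := by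
  rw [ctrl, ← integral_inner (hU.integrableOn_integrand hu hbd) η, integral_re]
  exact (hU.integrableOn_integrand hu hbd).const_inner η

end Ctrl
section Inf

variable {U : ℝ → H →L[ℂ] H} {B : H →L[ℂ] H} {y₀ z_d : H} {T τ r M : ℝ}

lemma MNP_le {u : ℝ → H} (hu : u ∈ WadmSet U B y₀ z_d T τ r) :
    MNP U B y₀ z_d T τ r ≤ supNorm u τ T :=
  csInf_le ⟨0, by rintro x ⟨v, -, rfl⟩; exact supNorm_nonneg v τ T⟩ ⟨u, hu, rfl⟩

lemma rOP_le {u : ℝ → H} (hu : u ∈ UadmSet M τ T) :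
    rOP U B y₀ z_d T M τ ≤ ‖stateT U B T τ u y₀ - z_d‖ :=
  csInf_le ⟨0, by rintro x ⟨v, -, rfl⟩; exact norm_nonneg _⟩ ⟨u, hu, rfl⟩

lemma Mtau_le {u : ℝ → H} (hmem : MemLinfty u 0 T) (hs : stateT U B T τ u y₀ = z_d) :
    Mtau U B y₀ z_d T τ ≤ supNorm u τ T :=
  csInf_le ⟨0, by rintro x ⟨v, -, rfl⟩; exact supNorm_nonneg v τ T⟩ ⟨u, ⟨hmem, hs⟩, rfl⟩

/-- Shrinking a control that reaches the interior of the target ball. -/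
lemma shrink (hU : IsUnitaryGroup U) (hM : 0 < M) {v : ℝ → H}
    (hv : MemLinfty v 0 T)
    (hvM : ∀ᵐ t : ℝ ∂volume, t ∈ Ioo τ T → ‖v t‖ ≤ M)
    (hdist : ‖stateT U B T τ v y₀ - z_d‖ < r) :
    ∃ v' : ℝ → H, v' ∈ WadmSet U B y₀ z_d T τ r ∧ supNorm v' τ T < M := by
  set J := ctrl U B T τ v with hJ
  set d := ‖stateT U B T τ v y₀ - z_d‖ with hd
  set ε : ℝ := min (1/2) ((r - d) / (2 * (‖J‖ + 1))) with hε
  have hJ1 : (0:ℝ) < ‖J‖ + 1 := by positivity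
  have hrd : 0 < r - d := sub_pos.2 hdist
  have hε0 : 0 < ε := lt_min (by norm_num) (by positivity)
  have hε1 : ε ≤ 1/2 := min_le_left _ _
  have hεJ : ε * ‖J‖ < r - d := by
    have h1 : ε ≤ (r - d) / (2 * (‖J‖ + 1)) := min_le_right _ _
    have h2 : ε * (2 * (‖J‖ + 1)) ≤ r - d := by
      rw [← le_div_iff₀ (by positivity)]; exact h1
    nlinarith [norm_nonneg J, hε0]
  refine ⟨fun s => ((1 - ε : ℝ) : ℂ) • v s, ⟨⟨hv.1.const_smul _, ?_⟩, ?_⟩, ?_⟩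
  · obtain ⟨c, hc⟩ := hv.2
    refine ⟨c, hc.mono fun t ht hm => ?_⟩
    have : ‖((1 - ε : ℝ) : ℂ) • v t‖ = |1 - ε| * ‖v t‖ := by
      rw [norm_smul, Complex.norm_real, Real.norm_eq_abs]
    rw [this]
    have h1 : |1 - ε| ≤ 1 := by rw [abs_le]; constructor <;> nlinarith
    calc |1 - ε| * ‖v t‖ ≤ 1 * ‖v t‖ :=
          mul_le_mul_of_nonneg_right h1 (norm_nonneg _)
      _ = ‖v t‖ := one_mul _
      _ ≤ c := ht hm
  · -- distance estimate
    have hsm : ctrl U B T τ (fun s => ((1 - ε : ℝ) : ℂ) • v s) = ((1 - ε : ℝ) : ℂ) • J :=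
      ctrl_smul T τ _ v
    have hsplit : ((1 - ε : ℝ) : ℂ) • J = J - ((ε : ℝ) : ℂ) • J := by
      push_cast
      rw [sub_smul, one_smul]
    have hste : stateT U B T τ (fun s => ((1 - ε : ℝ) : ℂ) • v s) y₀ - z_d
        = (stateT U B T τ v y₀ - z_d) - ((ε : ℝ) : ℂ) • J := by
      rw [stateT_eq, hsm, hsplit, stateT_eq]
      abel
    rw [hste]
    calc ‖(stateT U B T τ v y₀ - z_d) - ((ε : ℝ) : ℂ) • J‖
        ≤ d + ‖((ε : ℝ) : ℂ) • J‖ := norm_sub_le _ _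
      _ = d + ε * ‖J‖ := by rw [norm_smul]; simp [abs_of_pos hε0]
      _ ≤ r := by nlinarith
  · have hb : ∀ᵐ t : ℝ ∂volume, t ∈ Ioo τ T → ‖((1 - ε : ℝ) : ℂ) • v t‖ ≤ (1 - ε) * M := by
      refine hvM.mono fun t ht hm => ?_
      have : ‖((1 - ε : ℝ) : ℂ) • v t‖ = |1 - ε| * ‖v t‖ := by
        rw [norm_smul, Complex.norm_real, Real.norm_eq_abs]
      rw [this, abs_of_pos (by nlinarith : (0:ℝ) < 1 - ε)]
      exact mul_le_mul_of_nonneg_left (ht hm) (by nlinarith)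
    have := supNorm_le (by nlinarith : (0:ℝ) ≤ (1 - ε) * M) hb
    calc supNorm (fun s => ((1 - ε : ℝ) : ℂ) • v s) τ T ≤ (1 - ε) * M := this
      _ < M := by nlinarith

end Inf
section OPNorm

local notation "⟪" x ", " y "⟫" => (inner ℂ x y : ℂ)

variable {U : ℝ → H →L[ℂ] H} {B : H →L[ℂ] H}

lemma OP_norm_eq (hU : IsUnitaryGroup U) (hB : IsOrthProj B) (hUC : UC U B)
    {T τ M : ℝ} {y₀ z_d : H} (hτ : τ ∈ Ico (0:ℝ) T) (hM : 0 ≤ M)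
    (hMlt : M < Mtau U B y₀ z_d T τ)
    {u : ℝ → H} (hu : IsOptOP U B y₀ z_d T M τ u) : supNorm u τ T = M := by
  obtain ⟨⟨hmem, hMb⟩, hρ⟩ := hu
  have h1 : supNorm u τ T ≤ M := supNorm_le hM hMb
  by_contra hne
  have hm : supNorm u τ T < M := lt_of_le_of_ne h1 hne
  have hy : stateT U B T τ u y₀ ≠ z_d := by
    intro he
    exact absurd ((Mtau_le hmem he).trans h1) (not_le.2 hMlt)
  set η := z_d - stateT U B T τ u y₀ with hηdef
  have hη : η ≠ 0 := sub_ne_zero.2 (Ne.symm hy)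
  have hηpos : (0:ℝ) < ‖η‖ := norm_pos_iff.2 hη
  set w : ℝ → H := fun s => U (s - T) η with hwdef
  have hw_cont : Continuous w := (hU.2.2.2 η).comp (continuous_id.sub continuous_const)
  have hw_norm : ∀ s, ‖w s‖ = ‖η‖ := fun s => hU.2.2.1 _ η
  have hw_bd : ∀ᵐ t : ℝ ∂volume, t ∈ Ioo τ T → ‖w t‖ ≤ ‖η‖ :=
    Eventually.of_forall fun t _ => (hw_norm t).le
  set J := ctrl U B T τ w with hJdef
  set g : ℝ → ℝ := fun s => ‖B (w s)‖ ^ 2 with hgdef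
  have hg_cont : Continuous g := ((B.continuous.comp hw_cont).norm).pow 2
  have hg_int : IntegrableOn g (Ioo τ T) volume :=
    hg_cont.integrableOn_Icc.mono_set Ioo_subset_Icc_self
  set a := ∫ s in Ioo τ T, g s with hadef
  have hkey : RCLike.re ⟪η, J⟫ = a := by
    rw [hJdef, re_inner_ctrl hU η hw_cont.aestronglyMeasurable hw_bd, hadef]
    refine setIntegral_congr_fun measurableSet_Ioo fun s _ => ?_
    have e1 : ⟪η, U (T - s) (B (w s))⟫ = ⟪U (-(T - s)) η, B (w s)⟫ := hU.inner_left _ _ _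
    have e2 : ⟪B (w s), w s⟫ = ⟪w s, B (w s)⟫ := hB.2.2 _ _
    rw [e1, neg_sub, ← e2, hB.inner_self']
  have ha_nonneg : 0 ≤ a :=
    setIntegral_nonneg measurableSet_Ioo fun s _ => by simp only [hgdef]; positivity
  have ha_pos : 0 < a := by
    rcases ha_nonneg.lt_or_eq with h | h
    · exact h
    · exfalso
      have h0 : (0 : ℝ → ℝ) ≤ᵐ[volume.restrict (Ioo τ T)] g :=
        Eventually.of_forall fun s => by simp only [hgdef, Pi.zero_apply]; positivity
      have hzero : g =ᵐ[volume.restrict (Ioo τ T)] 0 :=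
        (integral_eq_zero_iff_of_nonneg_ae h0 hg_int).1 h.symm
      have hne' : ∀ᵐ s ∂(volume.restrict (Ioo τ T)), B (U (s - T) η) ≠ 0 :=
        ae_restrict_of_ae (hUC.ae_ne hη T)
      have hfalse : ∀ᵐ _s ∂(volume.restrict (Ioo τ T)), False := by
        filter_upwards [hzero, hne'] with s h1 h2
        refine h2 ?_
        have hn : ‖B (w s)‖ ^ 2 = 0 := h1
        have : ‖B (w s)‖ = 0 := by nlinarith [norm_nonneg (B (w s))]
        simpa [hwdef] using norm_eq_zero.1 this
      have hzero' : volume.restrict (Ioo τ T) univ = 0 := by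
        have := ae_iff.1 hfalse
        simpa using this
      rw [Measure.restrict_apply_univ, Real.volume_Ioo] at hzero'
      have := ENNReal.ofReal_eq_zero.1 hzero'
      linarith [hτ.2]
  set m := supNorm u τ T with hmdef
  set δ : ℝ := min ((M - m) / ‖η‖) (a / (‖J‖ ^ 2 + 1)) with hδdef
  have hδ0 : 0 < δ := lt_min (div_pos (sub_pos.2 hm) hηpos) (div_pos ha_pos (by positivity))
  have hδη : δ * ‖η‖ ≤ M - m := (le_div_iff₀ hηpos).1 (min_le_left _ _)
  have hδJ : δ * (‖J‖ ^ 2 + 1) ≤ a := (le_div_iff₀ (by positivity)).1 (min_le_right _ _)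
  have hbu : ∀ᵐ t : ℝ ∂volume, t ∈ Ioo τ T → ‖u t‖ ≤ m :=
    ae_le_supNorm (memLinfty_bound_sub hmem hτ.1)
  obtain ⟨c₀, hc₀⟩ := memLinfty_bound_sub hmem hτ.1
  have hIu : IntegrableOn (fun s : ℝ => U (T - s) (B (u s))) (Ioo τ T) volume :=
    hU.integrableOn_integrand hmem.1 hc₀
  have hIw : IntegrableOn (fun s : ℝ => U (T - s) (B (w s))) (Ioo τ T) volume :=
    hU.integrableOn_integrand hw_cont.aestronglyMeasurable hw_bd
  have hsmul : ∀ (t : ℝ) (x : H), ‖((δ:ℝ):ℂ) • x‖ = δ * ‖x‖ := fun t x => by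
    rw [norm_smul, Complex.norm_real, Real.norm_eq_abs, abs_of_pos hδ0]
  have hu'mem : MemLinfty (fun s => u s + ((δ:ℝ):ℂ) • w s) 0 T := by
    refine ⟨hmem.1.add (hw_cont.aestronglyMeasurable.const_smul _), ?_⟩
    obtain ⟨c, hc⟩ := hmem.2
    refine ⟨c + δ * ‖η‖, hc.mono fun t ht hm' => ?_⟩
    calc ‖u t + ((δ:ℝ):ℂ) • w t‖ ≤ ‖u t‖ + ‖((δ:ℝ):ℂ) • w t‖ := norm_add_le _ _
      _ ≤ c + δ * ‖η‖ := by
          rw [hsmul t, hw_norm t]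
          exact add_le_add (ht hm') le_rfl
  have hu'adm : (fun s => u s + ((δ:ℝ):ℂ) • w s) ∈ UadmSet M τ T := by
    refine ⟨hu'mem, hbu.mono fun t ht hm' => ?_⟩
    calc ‖u t + ((δ:ℝ):ℂ) • w t‖ ≤ ‖u t‖ + ‖((δ:ℝ):ℂ) • w t‖ := norm_add_le _ _
      _ ≤ m + δ * ‖η‖ := by rw [hsmul t, hw_norm t]; exact add_le_add (ht hm') le_rfl
      _ ≤ M := by linarith
  have hrle : rOP U B y₀ z_d T M τ
      ≤ ‖stateT U B T τ (fun s => u s + ((δ:ℝ):ℂ) • w s) y₀ - z_d‖ := rOP_le hu'adm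
  have hctrl : ctrl U B T τ (fun s => u s + ((δ:ℝ):ℂ) • w s)
      = ctrl U B T τ u + ((δ:ℝ):ℂ) • J := by
    rw [hJdef]
    simp only [ctrl, _root_.map_add, _root_.map_smul]
    have h2 : IntegrableOn (fun s : ℝ => ((δ:ℝ):ℂ) • U (T - s) (B (w s))) (Ioo τ T) volume :=
      hIw.smul _
    rw [integral_add hIu h2, integral_smul]
  have hstate : stateT U B T τ (fun s => u s + ((δ:ℝ):ℂ) • w s) y₀ - z_d
      = ((δ:ℝ):ℂ) • J - η := by
    rw [stateT_eq, hctrl, hηdef, stateT_eq]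
    abel
  have hnorm2 : ‖((δ:ℝ):ℂ) • J - η‖ ^ 2 = δ ^ 2 * ‖J‖ ^ 2 - 2 * (δ * a) + ‖η‖ ^ 2 := by
    rw [@norm_sub_sq ℂ]
    have h2 : RCLike.re ⟪((δ:ℝ):ℂ) • J, η⟫ = δ * a := by
      rw [inner_smul_left, Complex.conj_ofReal, ← Complex.real_smul, RCLike.smul_re,
        inner_re_symm, hkey]
    rw [h2, hsmul 0]
    ring
  have hlt : ‖stateT U B T τ (fun s => u s + ((δ:ℝ):ℂ) • w s) y₀ - z_d‖ ^ 2 < ‖η‖ ^ 2 := by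
    rw [hstate, hnorm2]
    nlinarith [sq_nonneg ‖J‖]
  have hlt' : ‖stateT U B T τ (fun s => u s + ((δ:ℝ):ℂ) • w s) y₀ - z_d‖ < ‖η‖ :=
    lt_of_pow_lt_pow_left₀ 2 (norm_nonneg _) hlt
  have hηρ : ‖η‖ = rOP U B y₀ z_d T M τ := by
    rw [hηdef, norm_sub_rev]
    exact hρ
  rw [hηρ] at hlt'
  exact absurd hrle (not_le.2 hlt')

end OPNorm
section NP

local notation "⟪" x ", " y "⟫" => (inner ℂ x y : ℂ)

variable {U : ℝ → H →L[ℂ] H} {B : H →L[ℂ] H}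

lemma NP_bangbang (hU : IsUnitaryGroup U) (hB : IsOrthProj B) (hUC : UC U B)
    {T : ℝ} {y₀ z_d : H} {τ r : ℝ} (hτ : τ ∈ Ico (0:ℝ) T)
    (hr : 0 < r) {u : ℝ → H} (hu : IsOptNP U B y₀ z_d T τ r u) :
    ∀ᵐ t : ℝ ∂volume, t ∈ Ioo τ T → ‖u t‖ = MNP U B y₀ z_d T τ r := by
  obtain ⟨⟨hmem, hdist⟩, hsup⟩ := hu
  set M := MNP U B y₀ z_d T τ r with hMdef
  have hM0 : 0 ≤ M := hsup ▸ supNorm_nonneg u τ T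
  have hMle : ∀ᵐ t : ℝ ∂volume, t ∈ Ioo τ T → ‖u t‖ ≤ M :=
    (ae_le_supNorm (memLinfty_bound_sub hmem hτ.1)).mono fun t ht hm => (ht hm).trans_eq hsup
  rcases eq_or_lt_of_le hM0 with hM | hM
  · refine hMle.mono fun t ht hm => ?_
    have h1 := ht hm
    rw [← hM] at h1 ⊢
    exact le_antisymm h1 (norm_nonneg _)
  · -- M > 0
    have heq : ‖stateT U B T τ u y₀ - z_d‖ = r := by
      rcases lt_or_eq_of_le hdist with hlt | he
      · obtain ⟨v', hv'W, hv'n⟩ := shrink hU hM hmem hMle hlt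
        exact absurd (MNP_le hv'W) (not_le.2 hv'n)
      · exact he
    set η := z_d - stateT U B T τ u y₀ with hηdef
    have hηnorm : ‖η‖ = r := by rw [hηdef, norm_sub_rev]; exact heq
    have hη : η ≠ 0 := by
      intro h0
      rw [h0, norm_zero] at hηnorm
      exact absurd hηnorm.symm hr.ne'
    set w : ℝ → H := fun s => U (s - T) η with hwdef
    have hw_cont : Continuous w := (hU.2.2.2 η).comp (continuous_id.sub continuous_const)
    set g : ℝ → ℝ := fun s => ‖B (w s)‖ with hgdef
    have hg_cont : Continuous g := (B.continuous.comp hw_cont).norm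
    have hg_nonneg : ∀ s, 0 ≤ g s := fun s => norm_nonneg _
    set v : ℝ → H := fun s => ((M * (g s)⁻¹ : ℝ) : ℂ) • B (w s) with hvdef
    have hv_aesm : AEStronglyMeasurable v (volume : Measure ℝ) := by
      rw [hvdef]
      exact ((Complex.measurable_ofReal.comp
        (measurable_const.mul hg_cont.measurable.inv)).aestronglyMeasurable).smul
        (B.continuous.comp hw_cont).aestronglyMeasurable
    have hv_bd : ∀ s, ‖v s‖ ≤ M := by
      intro s
      rw [hvdef]
      simp only
      rw [norm_smul, Complex.norm_real, Real.norm_eq_abs]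
      rcases eq_or_ne (g s) 0 with h | h
      · have hBw : ‖B (w s)‖ = 0 := h
        rw [hBw, mul_zero]
        exact hM0
      · have hgpos : 0 < g s := lt_of_le_of_ne (hg_nonneg s) (Ne.symm h)
        have habs : |M * (g s)⁻¹| = M * (g s)⁻¹ := abs_of_nonneg (by positivity)
        rw [habs]
        have : ‖B (w s)‖ = g s := rfl
        rw [this]
        rw [mul_assoc, inv_mul_cancel₀ h, mul_one]
    have hIu : IntegrableOn (fun s : ℝ => U (T - s) (B (u s))) (Ioo τ T) volume :=
      hU.integrableOn_integrand hmem.1 hMle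
    have hIv : IntegrableOn (fun s : ℝ => U (T - s) (B (v s))) (Ioo τ T) volume :=
      hU.integrableOn_integrand hv_aesm (Eventually.of_forall fun t _ => hv_bd t)
    have h_inner : ∀ (s : ℝ) (x : H), ⟪η, U (T - s) (B x)⟫ = ⟪B (w s), x⟫ := by
      intro s x
      rw [hU.inner_left, neg_sub]
      exact (hB.2.2 _ _).symm
    -- variational inequality
    have hVI : RCLike.re ⟪η, ctrl U B T τ v⟫ ≤ RCLike.re ⟪η, ctrl U B T τ u⟫ := by
      by_contra hlt0
      push_neg at hlt0
      set d := ctrl U B T τ v - ctrl U B T τ u with hddef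
      have hb : 0 < RCLike.re ⟪η, d⟫ := by
        have : RCLike.re ⟪η, d⟫
            = RCLike.re ⟪η, ctrl U B T τ v⟫ - RCLike.re ⟪η, ctrl U B T τ u⟫ := by
          rw [hddef, inner_sub_right, map_sub]
        rw [this]
        linarith
      set lam : ℝ := min 1 (RCLike.re ⟪η, d⟫ / (‖d‖ ^ 2 + 1)) with hlamdef
      have hlam0 : 0 < lam := lt_min one_pos (div_pos hb (by positivity))
      have hlam1 : lam ≤ 1 := min_le_left _ _
      have hlamd : lam * (‖d‖ ^ 2 + 1) ≤ RCLike.re ⟪η, d⟫ :=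
        (le_div_iff₀ (by positivity)).1 (min_le_right _ _)
      have hulam_eq : ∀ s : ℝ, u s + ((lam:ℝ):ℂ) • (v s - u s)
          = ((1 - lam : ℝ):ℂ) • u s + ((lam:ℝ):ℂ) • v s := fun s => by push_cast; module
      have hulam_mem : MemLinfty (fun s => u s + ((lam:ℝ):ℂ) • (v s - u s)) 0 T := by
        refine ⟨hmem.1.add (((hv_aesm.sub hmem.1)).const_smul _), ?_⟩
        obtain ⟨c, hc⟩ := hmem.2
        refine ⟨c + (M + c), hc.mono fun t ht hm' => ?_⟩
        have h1 : ‖((lam:ℝ):ℂ) • (v t - u t)‖ = lam * ‖v t - u t‖ := by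
          rw [norm_smul, Complex.norm_real, Real.norm_eq_abs, abs_of_pos hlam0]
        calc ‖u t + ((lam:ℝ):ℂ) • (v t - u t)‖
            ≤ ‖u t‖ + ‖((lam:ℝ):ℂ) • (v t - u t)‖ := norm_add_le _ _
          _ ≤ c + (M + c) := by
              rw [h1]
              have h2 : ‖v t - u t‖ ≤ M + c := (norm_sub_le _ _).trans
                (add_le_add (hv_bd t) (ht hm'))
              have h3 : lam * ‖v t - u t‖ ≤ M + c := by
                calc lam * ‖v t - u t‖ ≤ 1 * ‖v t - u t‖ :=
                      mul_le_mul_of_nonneg_right hlam1 (norm_nonneg _)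
                  _ = ‖v t - u t‖ := one_mul _
                  _ ≤ M + c := h2
              exact add_le_add (ht hm') h3
      have hulam_bd : ∀ᵐ t : ℝ ∂volume, t ∈ Ioo τ T
          → ‖u t + ((lam:ℝ):ℂ) • (v t - u t)‖ ≤ M := by
        refine hMle.mono fun t ht hm' => ?_
        rw [hulam_eq t]
        have h2 : ‖((1 - lam : ℝ):ℂ) • u t‖ ≤ (1 - lam) * M := by
          rw [norm_smul, Complex.norm_real, Real.norm_eq_abs, abs_of_nonneg (by linarith)]
          exact mul_le_mul_of_nonneg_left (ht hm') (by linarith)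
        have h3 : ‖((lam:ℝ):ℂ) • v t‖ ≤ lam * M := by
          rw [norm_smul, Complex.norm_real, Real.norm_eq_abs, abs_of_pos hlam0]
          exact mul_le_mul_of_nonneg_left (hv_bd t) hlam0.le
        calc ‖((1 - lam : ℝ):ℂ) • u t + ((lam:ℝ):ℂ) • v t‖
            ≤ ‖((1 - lam : ℝ):ℂ) • u t‖ + ‖((lam:ℝ):ℂ) • v t‖ := norm_add_le _ _
          _ ≤ (1 - lam) * M + lam * M := add_le_add h2 h3
          _ = M := by ring
      have hIvu : IntegrableOn (fun s : ℝ => ((lam:ℝ):ℂ) • (U (T - s) (B (v s))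
          - U (T - s) (B (u s)))) (Ioo τ T) volume := ((hIv.sub hIu).smul _)
      have hctrl : ctrl U B T τ (fun s => u s + ((lam:ℝ):ℂ) • (v s - u s))
          = ctrl U B T τ u + ((lam:ℝ):ℂ) • d := by
        rw [hddef]
        simp only [ctrl, _root_.map_add, _root_.map_smul, map_sub]
        rw [integral_add hIu hIvu, integral_smul, integral_sub hIv hIu]
      have hstate : stateT U B T τ (fun s => u s + ((lam:ℝ):ℂ) • (v s - u s)) y₀ - z_d
          = ((lam:ℝ):ℂ) • d - η := by
        rw [stateT_eq, hctrl, hηdef, stateT_eq]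
        abel
      have hnorm2 : ‖((lam:ℝ):ℂ) • d - η‖ ^ 2
          = lam ^ 2 * ‖d‖ ^ 2 - 2 * (lam * RCLike.re ⟪η, d⟫) + ‖η‖ ^ 2 := by
        rw [@norm_sub_sq ℂ]
        have h2 : RCLike.re ⟪((lam:ℝ):ℂ) • d, η⟫ = lam * RCLike.re ⟪η, d⟫ := by
          rw [inner_smul_left, Complex.conj_ofReal, ← Complex.real_smul, RCLike.smul_re,
            inner_re_symm]
        have h1 : ‖((lam:ℝ):ℂ) • d‖ = lam * ‖d‖ := by
          rw [norm_smul, Complex.norm_real, Real.norm_eq_abs, abs_of_pos hlam0]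
        rw [h1, h2]
        ring
      have hltr : ‖stateT U B T τ (fun s => u s + ((lam:ℝ):ℂ) • (v s - u s)) y₀ - z_d‖ < r := by
        have hsq : ‖stateT U B T τ (fun s => u s + ((lam:ℝ):ℂ) • (v s - u s)) y₀ - z_d‖ ^ 2
            < r ^ 2 := by
          rw [hstate, hnorm2, hηnorm]
          nlinarith [sq_nonneg ‖d‖, hlam0, hb, hlamd]
        exact lt_of_pow_lt_pow_left₀ 2 hr.le hsq
      obtain ⟨v', hv'W, hv'n⟩ := shrink hU hM hulam_mem hulam_bd hltr
      exact absurd (MNP_le hv'W) (not_le.2 hv'n)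
    -- translate both sides into integrals
    have hIL : RCLike.re ⟪η, ctrl U B T τ v⟫ = ∫ s in Ioo τ T, M * g s := by
      rw [re_inner_ctrl hU η hv_aesm (Eventually.of_forall fun t _ => hv_bd t)]
      refine setIntegral_congr_fun measurableSet_Ioo fun s _ => ?_
      rw [h_inner s (v s), hvdef]
      simp only
      rw [inner_smul_right, ← Complex.real_smul, RCLike.smul_re, inner_self_eq_norm_sq]
      have hBg : ‖B (w s)‖ = g s := rfl
      rw [hBg]
      rcases eq_or_ne (g s) 0 with h | h
      · rw [h]; ring
      · field_simp
    have hIR : RCLike.re ⟪η, ctrl U B T τ u⟫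
        = ∫ s in Ioo τ T, RCLike.re ⟪B (w s), u s⟫ := by
      rw [re_inner_ctrl hU η hmem.1 hMle]
      exact setIntegral_congr_fun measurableSet_Ioo fun s _ => by rw [h_inner s (u s)]
    have hInt1 : IntegrableOn (fun s : ℝ => M * g s) (Ioo τ T) volume :=
      (hg_cont.const_smul M).integrableOn_Icc.mono_set Ioo_subset_Icc_self
    have hInt2 : IntegrableOn (fun s : ℝ => RCLike.re ⟪B (w s), u s⟫) (Ioo τ T) volume := by
      refine Integrable.mono' (g := fun _ => (‖B‖ * ‖η‖) * M)
        (integrableOn_const measure_Ioo_lt_top.ne) ?_ ?_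
      · exact (RCLike.continuous_re.comp_aestronglyMeasurable
          (((B.continuous.comp hw_cont).aestronglyMeasurable.restrict).inner hmem.1.restrict))
      · rw [ae_restrict_iff' measurableSet_Ioo]
        refine hMle.mono fun t ht hm' => ?_
        have h1 : ‖RCLike.re ⟪B (w t), u t⟫‖ ≤ ‖⟪B (w t), u t⟫‖ := by
          rw [Real.norm_eq_abs]
          exact RCLike.abs_re_le_norm _
        refine h1.trans ((norm_inner_le_norm _ _).trans ?_)
        have h2 : ‖B (w t)‖ ≤ ‖B‖ * ‖η‖ := by
          calc ‖B (w t)‖ ≤ ‖B‖ * ‖w t‖ := B.le_opNorm _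
            _ = ‖B‖ * ‖η‖ := by rw [hwdef]; simp only; rw [hU.2.2.1]
        exact mul_le_mul h2 (ht hm') (norm_nonneg _) (by positivity)
    have hint_le : ∫ s in Ioo τ T, (M * g s - RCLike.re ⟪B (w s), u s⟫) ≤ 0 := by
      rw [integral_sub hInt1 hInt2, ← hIL, ← hIR]
      linarith
    have hF_nonneg : (0 : ℝ → ℝ) ≤ᵐ[volume.restrict (Ioo τ T)]
        fun s => M * g s - RCLike.re ⟪B (w s), u s⟫ := by
      rw [EventuallyLE, ae_restrict_iff' measurableSet_Ioo]
      refine hMle.mono fun t ht hm' => ?_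
      have h1 : RCLike.re ⟪B (w t), u t⟫ ≤ ‖B (w t)‖ * ‖u t‖ := re_inner_le_norm _ _
      have h2 : ‖B (w t)‖ * ‖u t‖ ≤ g t * M :=
        mul_le_mul_of_nonneg_left (ht hm') (hg_nonneg t)
      simp only [Pi.zero_apply]
      nlinarith
    have hF0 : (fun s => M * g s - RCLike.re ⟪B (w s), u s⟫)
        =ᵐ[volume.restrict (Ioo τ T)] 0 := by
      refine (integral_eq_zero_iff_of_nonneg_ae hF_nonneg (hInt1.sub hInt2)).1 ?_
      exact le_antisymm hint_le (integral_nonneg_of_ae hF_nonneg)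
    have hne' : ∀ᵐ s ∂(volume.restrict (Ioo τ T)), B (U (s - T) η) ≠ 0 :=
      ae_restrict_of_ae (hUC.ae_ne hη T)
    have hMle' : ∀ᵐ t ∂(volume.restrict (Ioo τ T)), ‖u t‖ ≤ M :=
      (ae_restrict_iff' measurableSet_Ioo).2 hMle
    have hfinal : ∀ᵐ t ∂(volume.restrict (Ioo τ T)), ‖u t‖ = M := by
      filter_upwards [hF0, hne', hMle'] with t h1 h2 h3
      have hgt : 0 < g t := by
        have : B (w t) ≠ 0 := h2
        have hn : g t ≠ 0 := by
          intro h0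
          exact this (norm_eq_zero.1 h0)
        exact lt_of_le_of_ne (hg_nonneg t) (Ne.symm hn)
      have he : M * g t = RCLike.re ⟪B (w t), u t⟫ := by
        have := h1
        simp only [Pi.zero_apply] at this
        linarith [this]
      have hle2 : RCLike.re ⟪B (w t), u t⟫ ≤ g t * ‖u t‖ := re_inner_le_norm _ _
      have hMle2 : M ≤ ‖u t‖ := by
        have : M * g t ≤ g t * ‖u t‖ := he ▸ hle2
        nlinarith
      exact le_antisymm h3 hMle2
    exact (ae_restrict_iff' measurableSet_Ioo).1 hfinal

end NP
section Main

local notation "⟪" x ", " y "⟫" => (inner ℂ x y : ℂ)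

variable {U : ℝ → H →L[ℂ] H} {B : H →L[ℂ] H}

lemma part_i (hU : IsUnitaryGroup U) (hB : IsOrthProj B) (hUC : UC U B)
    {T : ℝ} {y₀ z_d : H} {τ M : ℝ} (hτ : τ ∈ Ico (0:ℝ) T)
    (hM0 : 0 ≤ M) (hMlt : M < Mtau U B y₀ z_d T τ) {u : ℝ → H}
    (hu : IsOptOP U B y₀ z_d T M τ u) :
    IsOptNP U B y₀ z_d T τ (rOP U B y₀ z_d T M τ) u := by
  have hsup := OP_norm_eq hU hB hUC hτ hM0 hMlt hu
  obtain ⟨⟨hmem, hMb⟩, hρ⟩ := hu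
  have hWu : u ∈ WadmSet U B y₀ z_d T τ (rOP U B y₀ z_d T M τ) := ⟨hmem, le_of_eq hρ⟩
  refine ⟨hWu, ?_⟩
  have h1 : MNP U B y₀ z_d T τ (rOP U B y₀ z_d T M τ) ≤ M := (MNP_le hWu).trans hsup.le
  have h2 : M ≤ MNP U B y₀ z_d T τ (rOP U B y₀ z_d T M τ) := by
    refine le_csInf ⟨supNorm u τ T, ⟨u, hWu, rfl⟩⟩ ?_
    rintro x ⟨v, ⟨hvmem, hvd⟩, rfl⟩
    by_contra hlt
    push_neg at hlt
    have hvU : v ∈ UadmSet M τ T :=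
      ⟨hvmem, (ae_le_supNorm (memLinfty_bound_sub hvmem hτ.1)).mono
        fun t ht hm => (ht hm).trans hlt.le⟩
    have hveq : ‖stateT U B T τ v y₀ - z_d‖ = rOP U B y₀ z_d T M τ :=
      le_antisymm hvd (rOP_le hvU)
    exact absurd (OP_norm_eq hU hB hUC hτ hM0 hMlt ⟨hvU, hveq⟩) (ne_of_lt hlt)
  rw [hsup, le_antisymm h1 h2]

lemma part_ii (hU : IsUnitaryGroup U) {T : ℝ} {y₀ z_d : H} {τ r : ℝ}
    (hτ : τ ∈ Ico (0:ℝ) T) {u : ℝ → H}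
    (hu : IsOptNP U B y₀ z_d T τ r u) :
    IsOptOP U B y₀ z_d T (MNP U B y₀ z_d T τ r) τ u := by
  obtain ⟨⟨hmem, hdist⟩, hsup⟩ := hu
  set M := MNP U B y₀ z_d T τ r with hMdef
  have hM0 : 0 ≤ M := hsup ▸ supNorm_nonneg u τ T
  have hMle : ∀ᵐ t : ℝ ∂volume, t ∈ Ioo τ T → ‖u t‖ ≤ M :=
    (ae_le_supNorm (memLinfty_bound_sub hmem hτ.1)).mono fun t ht hm => (ht hm).trans_eq hsup
  have hUadm : u ∈ UadmSet M τ T := ⟨hmem, hMle⟩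
  refine ⟨hUadm, ?_⟩
  have hCA : ∀ v ∈ UadmSet M τ T,
      ‖stateT U B T τ u y₀ - z_d‖ ≤ ‖stateT U B T τ v y₀ - z_d‖ := by
    rintro v ⟨hvmem, hvM⟩
    by_contra hlt
    push_neg at hlt
    rcases eq_or_lt_of_le hM0 with hM | hM
    · have hu0 : ctrl U B T τ u = 0 :=
        ctrl_zero_of (hMle.mono fun t ht hm => (ht hm).trans (le_of_eq hM.symm))
      have hv0 : ctrl U B T τ v = 0 :=
        ctrl_zero_of (hvM.mono fun t ht hm => (ht hm).trans (le_of_eq hM.symm))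
      rw [stateT_eq, stateT_eq, hu0, hv0] at hlt
      exact lt_irrefl _ hlt
    · have hrlt : ‖stateT U B T τ v y₀ - z_d‖ < r := hlt.trans_le hdist
      obtain ⟨v', hv'W, hv'n⟩ := shrink hU hM hvmem hvM hrlt
      exact absurd (MNP_le hv'W) (not_le.2 hv'n)
  exact le_antisymm
    (le_csInf ⟨_, ⟨u, hUadm, rfl⟩⟩ (by rintro x ⟨v, hv, rfl⟩; exact hCA v hv))
    (rOP_le hUadm)

lemma NP_unique (hU : IsUnitaryGroup U) (hB : IsOrthProj B) (hUC : UC U B)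
    {T : ℝ} {y₀ z_d : H} {τ r : ℝ} (hτ : τ ∈ Ico (0:ℝ) T)
    (hr : 0 < r) {u₁ u₂ : ℝ → H} (hu₁ : IsOptNP U B y₀ z_d T τ r u₁)
    (hu₂ : IsOptNP U B y₀ z_d T τ r u₂) :
    ∀ᵐ t : ℝ ∂volume, t ∈ Ioo τ T → u₁ t = u₂ t := by
  obtain ⟨⟨hmem₁, hdist₁⟩, hsup₁⟩ := hu₁
  obtain ⟨⟨hmem₂, hdist₂⟩, hsup₂⟩ := hu₂
  set M := MNP U B y₀ z_d T τ r with hMdef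
  have hM0 : 0 ≤ M := hsup₁ ▸ supNorm_nonneg u₁ τ T
  have hMle₁ : ∀ᵐ t : ℝ ∂volume, t ∈ Ioo τ T → ‖u₁ t‖ ≤ M :=
    (ae_le_supNorm (memLinfty_bound_sub hmem₁ hτ.1)).mono fun t ht hm => (ht hm).trans_eq hsup₁
  have hMle₂ : ∀ᵐ t : ℝ ∂volume, t ∈ Ioo τ T → ‖u₂ t‖ ≤ M :=
    (ae_le_supNorm (memLinfty_bound_sub hmem₂ hτ.1)).mono fun t ht hm => (ht hm).trans_eq hsup₂
  have hI₁ : IntegrableOn (fun s : ℝ => U (T - s) (B (u₁ s))) (Ioo τ T) volume :=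
    hU.integrableOn_integrand hmem₁.1 hMle₁
  have hI₂ : IntegrableOn (fun s : ℝ => U (T - s) (B (u₂ s))) (Ioo τ T) volume :=
    hU.integrableOn_integrand hmem₂.1 hMle₂
  have hsm : ∀ x : H, ‖((1/2 : ℝ):ℂ) • x‖ = (1/2) * ‖x‖ := fun x => by
    rw [norm_smul, Complex.norm_real, Real.norm_eq_abs]
    norm_num
  have hmem_avg : MemLinfty (fun s => ((1/2 : ℝ):ℂ) • (u₁ s + u₂ s)) 0 T := by
    refine ⟨(hmem₁.1.add hmem₂.1).const_smul _, ?_⟩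
    obtain ⟨c₁, hc₁⟩ := hmem₁.2
    obtain ⟨c₂, hc₂⟩ := hmem₂.2
    refine ⟨c₁ + c₂, hc₁.mp (hc₂.mono fun t h2 h1 hm => ?_)⟩
    rw [hsm]
    calc (1/2 : ℝ) * ‖u₁ t + u₂ t‖ ≤ 1 * ‖u₁ t + u₂ t‖ := by
          refine mul_le_mul_of_nonneg_right (by norm_num) (norm_nonneg _)
      _ = ‖u₁ t + u₂ t‖ := one_mul _
      _ ≤ c₁ + c₂ := (norm_add_le _ _).trans (add_le_add (h1 hm) (h2 hm))
  have hctrl_avg : ctrl U B T τ (fun s => ((1/2 : ℝ):ℂ) • (u₁ s + u₂ s))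
      = ((1/2 : ℝ):ℂ) • (ctrl U B T τ u₁ + ctrl U B T τ u₂) := by
    simp only [ctrl, _root_.map_add, _root_.map_smul]
    rw [integral_smul, integral_add hI₁ hI₂]
  have hstate_avg : stateT U B T τ (fun s => ((1/2 : ℝ):ℂ) • (u₁ s + u₂ s)) y₀ - z_d
      = ((1/2 : ℝ):ℂ) • ((stateT U B T τ u₁ y₀ - z_d) + (stateT U B T τ u₂ y₀ - z_d)) := by
    rw [stateT_eq, hctrl_avg, stateT_eq, stateT_eq]
    push_cast
    module
  have hdist_avg : ‖stateT U B T τ (fun s => ((1/2 : ℝ):ℂ) • (u₁ s + u₂ s)) y₀ - z_d‖ ≤ r := by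
    rw [hstate_avg, hsm]
    have := (norm_add_le (stateT U B T τ u₁ y₀ - z_d) (stateT U B T τ u₂ y₀ - z_d)).trans
      (add_le_add hdist₁ hdist₂)
    linarith
  have hW_avg : (fun s => ((1/2 : ℝ):ℂ) • (u₁ s + u₂ s)) ∈ WadmSet U B y₀ z_d T τ r :=
    ⟨hmem_avg, hdist_avg⟩
  have hbd_avg : ∀ᵐ t : ℝ ∂volume, t ∈ Ioo τ T → ‖((1/2 : ℝ):ℂ) • (u₁ t + u₂ t)‖ ≤ M := by
    filter_upwards [hMle₁, hMle₂] with t h1 h2 hm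
    rw [hsm]
    have := (norm_add_le (u₁ t) (u₂ t)).trans (add_le_add (h1 hm) (h2 hm))
    linarith
  have hsup_avg : supNorm (fun s => ((1/2 : ℝ):ℂ) • (u₁ s + u₂ s)) τ T = M :=
    le_antisymm (supNorm_le hM0 hbd_avg) (MNP_le hW_avg)
  have hbb₁ := NP_bangbang hU hB hUC hτ hr ⟨⟨hmem₁, hdist₁⟩, hsup₁⟩
  have hbb₂ := NP_bangbang hU hB hUC hτ hr ⟨⟨hmem₂, hdist₂⟩, hsup₂⟩
  have hbb₃ := NP_bangbang hU hB hUC hτ hr ⟨hW_avg, hsup_avg⟩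
  filter_upwards [hbb₁, hbb₂, hbb₃] with t h1 h2 h3 hm
  have e1 : ‖u₁ t‖ = M := h1 hm
  have e2 : ‖u₂ t‖ = M := h2 hm
  have e3 : ‖u₁ t + u₂ t‖ = 2 * M := by
    have := h3 hm
    rw [hsm] at this
    linarith
  have hpar := parallelogram_law_with_norm ℂ (u₁ t) (u₂ t)
  have hz : ‖u₁ t - u₂ t‖ * ‖u₁ t - u₂ t‖ = 0 := by
    rw [e1, e2, e3] at hpar
    nlinarith
  have : ‖u₁ t - u₂ t‖ = 0 := by nlinarith [norm_nonneg (u₁ t - u₂ t)]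
  exact sub_eq_zero.1 (norm_eq_zero.1 this)

end Main

theorem op_np_equivalence
    (U : ℝ → H →L[ℂ] H) (B : H →L[ℂ] H) (hU : IsUnitaryGroup U) (hB : IsOrthProj B)
    (hEC : EC U B) (hECrev : EC (fun t => U (-t)) B)
    (hUC : UC U B)
    (T : ℝ) (hT : 0 < T) (y₀ z_d : H) (hrT : 0 < ‖U T y₀ - z_d‖) :
    (∀ τ ∈ Ico (0 : ℝ) T, ∀ M : ℝ, 0 ≤ M → M < Mtau U B y₀ z_d T τ →
      ∀ u : ℝ → H, IsOptOP U B y₀ z_d T M τ u → IsOptNP U B y₀ z_d T τ (rOP U B y₀ z_d T M τ) u) ∧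
    (∀ τ ∈ Ico (0 : ℝ) T, ∀ r ∈ Ioc (0 : ℝ) ‖U T y₀ - z_d‖,
      ∀ u : ℝ → H, IsOptNP U B y₀ z_d T τ r u → IsOptOP U B y₀ z_d T (MNP U B y₀ z_d T τ r) τ u) ∧
    (∀ τ ∈ Ico (0 : ℝ) T, ∀ r ∈ Ioc (0 : ℝ) ‖U T y₀ - z_d‖,
      (∀ u : ℝ → H, IsOptNP U B y₀ z_d T τ r u →
        ∀ᵐ t : ℝ ∂volume, t ∈ Ioo τ T → ‖u t‖ = MNP U B y₀ z_d T τ r) ∧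
      (∀ u₁ u₂ : ℝ → H, IsOptNP U B y₀ z_d T τ r u₁ → IsOptNP U B y₀ z_d T τ r u₂ →
        ∀ᵐ t : ℝ ∂volume, t ∈ Ioo τ T → u₁ t = u₂ t)) := by
  refine ⟨fun τ hτ M hM0 hMlt u hu => part_i hU hB hUC hτ hM0 hMlt hu,
    fun τ hτ r hr u hu => part_ii hU hτ hu,
    fun τ hτ r hr => ⟨fun u hu => NP_bangbang hU hB hUC hτ hr.1 hu,
      fun u₁ u₂ h1 h2 => NP_unique hU hB hUC hτ hr.1 h1 h2⟩⟩
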